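/- Let (γ_j) be a sequence of C² curves in the closed disk D_a ⊂ ℂ, each of length between positive constants L₁ and L₂, with endpoints on the boundary circle |z| = a, such that κ(γ_j) → 0 and the closest-point distances d(0, γ_j) → w₀ with 0 < w₀ < a, and such that the directions ϑ(γ_j) converge to θ*. Then γ_j converges uniformly (as sets, in Hausdorff distance) to the straight chord of D_a at distance w₀ from the origin with direction θ*. -/

import Mathlib

open Real Filter Set

lemma taylor_aux {γ : ℝ → ℂ} {L κ : ℝ} (hsm : ContDiff ℝ 2 γ)
    (hκ : ∀ u ∈ Icc (0:ℝ) L, ‖deriv (deriv γ) u‖ ≤ κ) {s t : ℝ}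
    (hs : s ∈ Icc (0:ℝ) L) (ht : t ∈ Icc (0:ℝ) L) :
    ‖γ t - γ s - (t - s) • deriv γ s‖ ≤ κ * (t - s) ^ 2 := by
  have h2 : ContDiff ℝ ((1:ℕ) + 1) γ := by exact_mod_cast hsm
  rw [contDiff_succ_iff_deriv] at h2
  obtain ⟨hdiff, -, hder⟩ := h2
  have hder' : Differentiable ℝ (deriv γ) := hder.differentiable (by simp)
  have lip : ∀ u ∈ Icc (0:ℝ) L, ‖deriv γ u - deriv γ s‖ ≤ κ * ‖u - s‖ := fun u hu =>
    Convex.norm_image_sub_le_of_norm_hasDerivWithin_le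
      (fun x _ => ((hder' x).hasDerivAt).hasDerivWithinAt) hκ (convex_Icc 0 L) hs hu
  have hsub : uIcc s t ⊆ Icc (0:ℝ) L := (ordConnected_Icc).uIcc_subset hs ht
  have key : ∀ x ∈ uIcc s t, HasDerivWithinAt (fun u => γ u - u • deriv γ s)
      (deriv γ x - deriv γ s) (uIcc s t) x := by
    intro x _
    have := (((hdiff x).hasDerivAt).sub
      ((hasDerivAt_id x).smul_const (deriv γ s))).hasDerivWithinAt (s := uIcc s t)
    exact this.congr_deriv (by simp)
  have bnd : ∀ x ∈ uIcc s t, ‖deriv γ x - deriv γ s‖ ≤ κ * |t - s| := by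
    intro x hx
    have hk0 : 0 ≤ κ := le_trans (norm_nonneg _) (hκ s hs)
    have hxs : |x - s| ≤ |t - s| := by
      rcases le_total s t with h | h
      · rw [uIcc_of_le h] at hx
        rw [abs_of_nonneg (by linarith [hx.1]), abs_of_nonneg (by linarith)]
        linarith [hx.2]
      · rw [uIcc_of_ge h] at hx
        rw [abs_of_nonpos (by linarith [hx.2]), abs_of_nonpos (by linarith)]
        linarith [hx.1]
    calc ‖deriv γ x - deriv γ s‖ ≤ κ * ‖x - s‖ := lip x (hsub hx)
      _ ≤ κ * |t - s| := by
        rw [Real.norm_eq_abs]; exact mul_le_mul_of_nonneg_left hxs hk0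
  have H := Convex.norm_image_sub_le_of_norm_hasDerivWithin_le key bnd (convex_uIcc s t)
    (left_mem_uIcc) (right_mem_uIcc)
  have e : γ t - t • deriv γ s - (γ s - s • deriv γ s)
      = γ t - γ s - (t - s) • deriv γ s := by
    rw [sub_smul]; ring_nf
  rw [e, Real.norm_eq_abs] at H
  calc ‖γ t - γ s - (t - s) • deriv γ s‖ ≤ κ * |t - s| * |t - s| := H
    _ = κ * (t - s) ^ 2 := by rw [mul_assoc, ← abs_mul, ← sq, abs_sq]

lemma normSq_orth {p e : ℂ} (he : ‖e‖ = 1)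
    (h : p.re * e.re + p.im * e.im = 0) (s : ℝ) :
    Complex.normSq (p + (s : ℂ) * e) = Complex.normSq p + s ^ 2 := by
  have he2 : e.re * e.re + e.im * e.im = 1 := by
    have := Complex.sq_norm e
    rw [he] at this
    simpa [Complex.normSq_apply] using this.symm
  simp only [Complex.normSq_apply, Complex.add_re, Complex.add_im, Complex.mul_re,
    Complex.mul_im, Complex.ofReal_re, Complex.ofReal_im]
  ring_nf
  linear_combination (s ^ 2) * he2 + (2 * s) * h

lemma exp_pi2 (θ : ℝ) : Complex.exp (Complex.I * ((θ : ℂ) + (π : ℂ) / 2))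
    = Complex.I * Complex.exp (Complex.I * θ) := by
  rw [show Complex.I * ((θ : ℂ) + (π : ℂ) / 2) = Complex.I * θ + ((π / 2 : ℝ) : ℂ) * Complex.I by
    push_cast; ring, Complex.exp_add, Complex.exp_mul_I]
  rw [← Complex.ofReal_cos, ← Complex.ofReal_sin, Real.cos_pi_div_two, Real.sin_pi_div_two]
  simp [mul_comm]

lemma abs_exp_I (θ : ℝ) : ‖Complex.exp (Complex.I * θ)‖ = 1 := by
  rw [Complex.norm_exp]; simp

set_option maxHeartbeats 2000000 in
/-- Curves in the disk `D_a` with curvature tending to `0`, closest points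
converging to `w₀ e^{i(θ* + π/2)}` (so that the distances to the origin tend
to `w₀`) and directions at the closest points converging to `θ*` converge in
Hausdorff distance to the straight chord of `D_a` at distance `w₀` from the
origin with direction `θ*`. -/
theorem stmt_11 (a L₁ L₂ w₀ θstar : ℝ) (ha : 0 < a) (hL₁ : 0 < L₁)
    (hL₁₂ : L₁ ≤ L₂) (hw0 : 0 < w₀) (hwa : w₀ < a)
    (L : ℕ → ℝ) (hL : ∀ j, L j ∈ Icc L₁ L₂)
    (γ : ℕ → ℝ → ℂ) (hsm : ∀ j, ContDiff ℝ 2 (γ j))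
    (hunit : ∀ j, ∀ t ∈ Icc 0 (L j), ‖deriv (γ j) t‖ = 1)
    (hdisk : ∀ j, ∀ t ∈ Icc 0 (L j), ‖γ j t‖ ≤ a)
    (hend : ∀ j, ‖γ j 0‖ = a ∧ ‖γ j (L j)‖ = a)
    (κ : ℕ → ℝ)
    (hκ : ∀ j, ∀ t ∈ Icc 0 (L j), ‖deriv (deriv (γ j)) t‖ ≤ κ j)
    (hκ0 : Tendsto κ atTop (nhds 0))
    (tmin : ℕ → ℝ) (htmem : ∀ j, tmin j ∈ Icc 0 (L j))
    (htmin : ∀ j, IsMinOn (fun t => ‖γ j t‖) (Icc 0 (L j)) (tmin j))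
    (hdist : Tendsto (fun j => ‖γ j (tmin j)‖) atTop (nhds w₀))
    (hpos : Tendsto (fun j => γ j (tmin j)) atTop
      (nhds ((w₀ : ℂ) * Complex.exp (Complex.I * (θstar + π / 2)))))
    (ϑ : ℕ → ℝ)
    (hdir : ∀ j, deriv (γ j) (tmin j) = Complex.exp (Complex.I * ϑ j))
    (hϑ : Tendsto ϑ atTop (nhds θstar)) :
    Tendsto (fun j => Metric.hausdorffDist ((γ j) '' Icc 0 (L j))
      {z : ℂ | ‖z‖ ≤ a ∧ ∃ t : ℝ,
        z = (w₀ : ℂ) * Complex.exp (Complex.I * (θstar + π / 2)) +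
          (t : ℂ) * Complex.exp (Complex.I * θstar)})
      atTop (nhds 0) := by
  set E : ℂ := Complex.exp (Complex.I * θstar) with hEdef
  set P : ℂ := (w₀ : ℂ) * Complex.exp (Complex.I * (θstar + π / 2)) with hPdef
  have hLpos : ∀ j, 0 < L j := fun j => lt_of_lt_of_le hL₁ (hL j).1
  have hPE : P = (w₀ : ℂ) * (Complex.I * E) := by
    rw [hPdef, hEdef, exp_pi2]
  have hEabs : ‖E‖ = 1 := abs_exp_I θstar
  have horthPE : P.re * E.re + P.im * E.im = 0 := by
    rw [hPE]
    simp [Complex.mul_re, Complex.mul_im]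
    ring
  have hnormSqP : Complex.normSq P = w₀ ^ 2 := by
    rw [hPE, Complex.normSq_mul, Complex.normSq_mul, Complex.normSq_I,
      ← Complex.sq_norm E, hEabs]
    simp [Complex.normSq_ofReal, sq]
  set b : ℝ := Real.sqrt (a ^ 2 - w₀ ^ 2) with hbdef
  have hab : 0 < a ^ 2 - w₀ ^ 2 := by nlinarith
  have hb0 : 0 < b := Real.sqrt_pos.mpr hab
  have hbsq : b ^ 2 = a ^ 2 - w₀ ^ 2 := Real.sq_sqrt hab.le
  have habsPE : ∀ s : ℝ, ‖P + (s : ℂ) * E‖ = Real.sqrt (w₀ ^ 2 + s ^ 2) := by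
    intro s
    rw [Complex.norm_def, normSq_orth hEabs horthPE, hnormSqP]
  -- per-j shorthands
  set p : ℕ → ℂ := fun j => γ j (tmin j) with hpdef
  set e : ℕ → ℂ := fun j => Complex.exp (Complex.I * ϑ j) with hedef
  have heabs : ∀ j, ‖e j‖ = 1 := fun j => abs_exp_I (ϑ j)
  set ε₁ : ℕ → ℝ := fun j => κ j * L₂ ^ 2 with hε₁def
  have hκnn : ∀ j, 0 ≤ κ j := fun j =>
    le_trans (norm_nonneg _) (hκ j 0 ⟨le_rfl, (hLpos j).le⟩)
  have hε₁nn : ∀ j, 0 ≤ ε₁ j := fun j => by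
    have := hκnn j; positivity
  have hε₁0 : Tendsto ε₁ atTop (nhds 0) := by
    simpa using hκ0.mul_const (L₂ ^ 2)
  have htay : ∀ j, ∀ t ∈ Icc (0:ℝ) (L j),
      ‖γ j t - (p j + ((t - tmin j : ℝ) : ℂ) * e j)‖ ≤ ε₁ j := by
    intro j t ht
    have h := taylor_aux (hsm j) (hκ j) (htmem j) ht
    rw [hdir j] at h
    have e1 : γ j t - (p j + ((t - tmin j : ℝ) : ℂ) * e j)
        = γ j t - γ j (tmin j) - (t - tmin j) • Complex.exp (Complex.I * ϑ j) := by
      rw [Complex.real_smul, hpdef, hedef]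
      ring
    rw [e1]
    refine h.trans ?_
    have hbound : (t - tmin j) ^ 2 ≤ L₂ ^ 2 := by
      have h1 := (htmem j).1; have h2 := (htmem j).2
      have h3 := ht.1; have h4 := ht.2
      have h5 := (hL j).2
      nlinarith
    have := hκnn j
    simp only [hε₁def]
    nlinarith
  -- limits of p and e
  have hptend : Tendsto p atTop (nhds P) := hpos
  have hpabs : Tendsto (fun j => ‖p j‖) atTop (nhds w₀) := hdist
  have hetend : Tendsto e atTop (nhds E) := by
    have h1 : Tendsto (fun j => Complex.I * (ϑ j : ℂ)) atTop (nhds (Complex.I * θstar)) := by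
      exact ((Complex.continuous_ofReal.tendsto θstar).comp hϑ).const_mul Complex.I
    exact (Complex.continuous_exp.tendsto _).comp h1
  -- orthogonality at the minimum, eventually
  have horth : ∀ᶠ j in atTop, (p j).re * (e j).re + (p j).im * (e j).im = 0 := by
    have hlt : ∀ᶠ j in atTop, ‖γ j (tmin j)‖ < a :=
      hdist.eventually_lt_const hwa
    filter_upwards [hlt] with j hj
    have h0 : 0 < tmin j := by
      rcases eq_or_lt_of_le (htmem j).1 with h | h
      · rw [← h, (hend j).1] at hj; exact absurd hj (lt_irrefl a)
      · exact h
    have h1 : tmin j < L j := by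
      rcases eq_or_lt_of_le (htmem j).2 with h | h
      · rw [h, (hend j).2] at hj; exact absurd hj (lt_irrefl a)
      · exact h
    have hdiffγ : Differentiable ℝ (γ j) := (hsm j).differentiable (by simp)
    have hdγ := (hdiffγ (tmin j)).hasDerivAt
    have hre : HasDerivAt (fun u => (γ j u).re) (deriv (γ j) (tmin j)).re (tmin j) :=
      Complex.reCLM.hasFDerivAt.comp_hasDerivAt _ hdγ
    have him : HasDerivAt (fun u => (γ j u).im) (deriv (γ j) (tmin j)).im (tmin j) :=
      Complex.imCLM.hasFDerivAt.comp_hasDerivAt _ hdγ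
    have hg : HasDerivAt (fun u => Complex.normSq (γ j u))
        (2 * ((γ j (tmin j)).re * (deriv (γ j) (tmin j)).re +
              (γ j (tmin j)).im * (deriv (γ j) (tmin j)).im)) (tmin j) := by
      have h2 := (hre.mul hre).add (him.mul him)
      simp only [Complex.normSq_apply]
      exact h2.congr_deriv (by ring)
    have hmin : IsLocalMin (fun u => Complex.normSq (γ j u)) (tmin j) := by
      refine IsMinOn.isLocalMin ?_ (Icc_mem_nhds h0 h1)
      refine isMinOn_iff.mpr fun u hu => ?_
      rw [← Complex.sq_norm, ← Complex.sq_norm]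
      exact pow_le_pow_left₀ (norm_nonneg _) (isMinOn_iff.mp (htmin j) u hu) 2
    have h0' := hmin.hasDerivAt_eq_zero hg
    rw [hdir j] at h0'
    have : (γ j (tmin j)).re * (Complex.exp (Complex.I * ϑ j)).re +
        (γ j (tmin j)).im * (Complex.exp (Complex.I * ϑ j)).im = 0 := by linarith
    simpa [hpdef, hedef] using this
  -- A and B and tmin limits
  set A : ℕ → ℝ := fun j => ‖p j + ((-(tmin j) : ℝ) : ℂ) * e j‖ with hAdef
  set B : ℕ → ℝ := fun j => ‖p j + ((L j - tmin j : ℝ) : ℂ) * e j‖ with hBdef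
  have hA : ∀ j, |A j - a| ≤ ε₁ j := by
    intro j
    have h := htay j 0 ⟨le_rfl, (hLpos j).le⟩
    have e1 : p j + ((0 - tmin j : ℝ) : ℂ) * e j = p j + ((-(tmin j) : ℝ) : ℂ) * e j := by
      norm_num
    rw [e1] at h
    have h2 : |A j - a| ≤ ‖(p j + ((-(tmin j) : ℝ) : ℂ) * e j) - γ j 0‖ := by
      rw [hAdef, ← (hend j).1]
      exact
        abs_norm_sub_norm_le (p j + ((-(tmin j) : ℝ) : ℂ) * e j) (γ j 0)
    refine h2.trans ?_
    rw [show (p j + ((-(tmin j) : ℝ) : ℂ) * e j) - γ j 0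
      = -(γ j 0 - (p j + ((-(tmin j) : ℝ) : ℂ) * e j)) by ring, norm_neg]
    exact h
  have hB : ∀ j, |B j - a| ≤ ε₁ j := by
    intro j
    have h := htay j (L j) ⟨(hLpos j).le, le_rfl⟩
    have h2 : |B j - a| ≤ ‖(p j + ((L j - tmin j : ℝ) : ℂ) * e j) - γ j (L j)‖ := by
      rw [hBdef, ← (hend j).2]
      exact
        abs_norm_sub_norm_le (p j + ((L j - tmin j : ℝ) : ℂ) * e j) (γ j (L j))
    refine h2.trans ?_
    rw [show (p j + ((L j - tmin j : ℝ) : ℂ) * e j) - γ j (L j)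
      = -(γ j (L j) - (p j + ((L j - tmin j : ℝ) : ℂ) * e j)) by ring, norm_neg]
    exact h
  have hAtend : Tendsto A atTop (nhds a) := by
    have h1 : Tendsto (fun j => A j - a) atTop (nhds 0) :=
      squeeze_zero_norm (fun j => by simpa [Real.norm_eq_abs] using hA j) hε₁0
    simpa using h1.add_const a
  have hBtend : Tendsto B atTop (nhds a) := by
    have h1 : Tendsto (fun j => B j - a) atTop (nhds 0) :=
      squeeze_zero_norm (fun j => by simpa [Real.norm_eq_abs] using hB j) hε₁0
    simpa using h1.add_const a
  have htmsq : ∀ᶠ j in atTop, tmin j = Real.sqrt (A j ^ 2 - ‖p j‖ ^ 2) := by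
    filter_upwards [horth] with j hj
    have hAsq : A j ^ 2 = ‖p j‖ ^ 2 + tmin j ^ 2 := by
      simp only [hAdef]
      rw [Complex.sq_norm, Complex.sq_norm, normSq_orth (heabs j) hj (-(tmin j))]
      ring
    rw [show A j ^ 2 - ‖p j‖ ^ 2 = tmin j ^ 2 by linarith,
      Real.sqrt_sq (htmem j).1]
  have hLtmsq : ∀ᶠ j in atTop, L j - tmin j = Real.sqrt (B j ^ 2 - ‖p j‖ ^ 2) := by
    filter_upwards [horth] with j hj
    have hBsq : B j ^ 2 = ‖p j‖ ^ 2 + (L j - tmin j) ^ 2 := by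
      simp only [hBdef]
      rw [Complex.sq_norm, Complex.sq_norm, normSq_orth (heabs j) hj (L j - tmin j)]
    rw [show B j ^ 2 - ‖p j‖ ^ 2 = (L j - tmin j) ^ 2 by linarith,
      Real.sqrt_sq (by linarith [(htmem j).2])]
  have htmin_tend : Tendsto tmin atTop (nhds b) := by
    have h1 : Tendsto (fun j => Real.sqrt (A j ^ 2 - ‖p j‖ ^ 2)) atTop (nhds b) := by
      rw [hbdef]
      exact ((hAtend.pow 2).sub (hpabs.pow 2)).sqrt
    exact h1.congr' (htmsq.mono fun j hj => hj.symm)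
  have hLtm_tend : Tendsto (fun j => L j - tmin j) atTop (nhds b) := by
    have h1 : Tendsto (fun j => Real.sqrt (B j ^ 2 - ‖p j‖ ^ 2)) atTop (nhds b) := by
      rw [hbdef]
      exact ((hBtend.pow 2).sub (hpabs.pow 2)).sqrt
    exact h1.congr' (hLtmsq.mono fun j hj => hj.symm)
  -- error terms
  set δ : ℕ → ℝ := fun j => |tmin j - b| + |L j - tmin j - b| with hδdef
  have hδ0 : Tendsto δ atTop (nhds 0) := by
    have h1 : Tendsto (fun j => |tmin j - b|) atTop (nhds 0) := by
      simpa using (htmin_tend.sub_const b).abs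
    have h2 : Tendsto (fun j => |L j - tmin j - b|) atTop (nhds 0) := by
      simpa using (hLtm_tend.sub_const b).abs
    simpa using h1.add h2
  have hδnn : ∀ j, 0 ≤ δ j := fun j => add_nonneg (abs_nonneg _) (abs_nonneg _)
  set ε₂ : ℕ → ℝ := fun j => ‖p j - P‖ + L₂ * ‖e j - E‖ with hε₂def
  have hε₂0 : Tendsto ε₂ atTop (nhds 0) := by
    have h1 : Tendsto (fun j => ‖p j - P‖) atTop (nhds 0) :=
      tendsto_iff_norm_sub_tendsto_zero.mp hptend
    have h2 : Tendsto (fun j => ‖e j - E‖) atTop (nhds 0) :=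
      tendsto_iff_norm_sub_tendsto_zero.mp hetend
    have := h1.add (h2.const_mul L₂)
    simpa [hε₂def, mul_comm] using this
  have hε₂nn : ∀ j, 0 ≤ ε₂ j := fun j =>
    add_nonneg (norm_nonneg _) (mul_nonneg (by linarith) (norm_nonneg _))
  set r : ℕ → ℝ := fun j => ε₁ j + ε₂ j + δ j with hrdef
  have hr0 : Tendsto r atTop (nhds 0) := by
    have := (hε₁0.add hε₂0).add hδ0
    simpa using this
  have hrnn : ∀ j, 0 ≤ r j := fun j =>
    add_nonneg (add_nonneg (hε₁nn j) (hε₂nn j)) (hδnn j)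
  -- main distance estimate
  have hchain : ∀ j (t s : ℝ), t ∈ Icc (0:ℝ) (L j) → |t - tmin j - s| ≤ δ j →
      dist (γ j t) (P + (s : ℂ) * E) ≤ r j := by
    intro j t s ht hts
    set s₀ : ℝ := t - tmin j with hs₀def
    have hdecomp : γ j t - (P + (s : ℂ) * E)
        = (γ j t - (p j + ((s₀ : ℝ) : ℂ) * e j)) + (p j - P)
          + ((s₀ : ℂ) * (e j - E)) + (((s₀ - s : ℝ) : ℂ) * E) := by
      push_cast
      ring
    rw [dist_eq_norm, hdecomp]
    have h1 := htay j t ht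
    have h2 : ‖(s₀ : ℂ) * (e j - E)‖ ≤ L₂ * ‖e j - E‖ := by
      rw [norm_mul, Complex.norm_real, Real.norm_eq_abs]
      have hs₀ : |s₀| ≤ L₂ := by
        rw [hs₀def, abs_le]
        constructor
        · linarith [ht.1, (htmem j).2, (hL j).2]
        · linarith [ht.2, (htmem j).1, (hL j).2]
      exact mul_le_mul_of_nonneg_right hs₀ (norm_nonneg _)
    have h3 : ‖((s₀ - s : ℝ) : ℂ) * E‖ ≤ δ j := by
      rw [norm_mul, Complex.norm_real, Real.norm_eq_abs,
        show ‖E‖ = (1:ℝ) by rw [hEabs], mul_one]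
      exact hts
    calc ‖(γ j t - (p j + ((s₀ : ℝ) : ℂ) * e j)) + (p j - P)
          + ((s₀ : ℂ) * (e j - E)) + (((s₀ - s : ℝ) : ℂ) * E)‖
        ≤ ‖(γ j t - (p j + ((s₀ : ℝ) : ℂ) * e j)) + (p j - P)
          + ((s₀ : ℂ) * (e j - E))‖ + ‖((s₀ - s : ℝ) : ℂ) * E‖ := norm_add_le _ _
      _ ≤ (‖(γ j t - (p j + ((s₀ : ℝ) : ℂ) * e j)) + (p j - P)‖
          + ‖(s₀ : ℂ) * (e j - E)‖) + ‖((s₀ - s : ℝ) : ℂ) * E‖ := by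
          gcongr; exact norm_add_le _ _
      _ ≤ ((‖γ j t - (p j + ((s₀ : ℝ) : ℂ) * e j)‖ + ‖p j - P‖)
          + ‖(s₀ : ℂ) * (e j - E)‖) + ‖((s₀ - s : ℝ) : ℂ) * E‖ := by
          gcongr; exact norm_add_le _ _
      _ ≤ ((ε₁ j + ‖p j - P‖) + L₂ * ‖e j - E‖) + δ j := by gcongr
      _ = r j := by rw [hrdef, hε₂def]; ring
    -- membership in the chord set
  have hmemT : ∀ s : ℝ, |s| ≤ b → ‖P + (s : ℂ) * E‖ ≤ a := by
    intro s hs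
    rw [habsPE]
    have h1 : s ^ 2 ≤ b ^ 2 := by
      have := abs_le.mp hs
      nlinarith [this.1, this.2]
    have h2 : w₀ ^ 2 + s ^ 2 ≤ a ^ 2 := by rw [hbsq] at h1; linarith
    calc Real.sqrt (w₀ ^ 2 + s ^ 2) ≤ Real.sqrt (a ^ 2) := Real.sqrt_le_sqrt h2
      _ = a := Real.sqrt_sq ha.le
  have hrevT : ∀ s : ℝ, ‖P + (s : ℂ) * E‖ ≤ a → |s| ≤ b := by
    intro s hs
    rw [habsPE] at hs
    have hnn : (0:ℝ) ≤ w₀ ^ 2 + s ^ 2 := by positivity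
    have h1 : w₀ ^ 2 + s ^ 2 ≤ a ^ 2 := by
      have := Real.sq_sqrt hnn
      nlinarith [Real.sqrt_nonneg (w₀ ^ 2 + s ^ 2)]
    have h2 : s ^ 2 ≤ b ^ 2 := by rw [hbsq]; linarith
    calc |s| = Real.sqrt (s ^ 2) := (Real.sqrt_sq_eq_abs s).symm
      _ ≤ Real.sqrt (b ^ 2) := Real.sqrt_le_sqrt h2
      _ = b := Real.sqrt_sq hb0.le
  -- the key Hausdorff bound
  have key : ∀ j, Metric.hausdorffDist ((γ j) '' Icc 0 (L j))
      {z : ℂ | ‖z‖ ≤ a ∧ ∃ t : ℝ, z = P + (t : ℂ) * E} ≤ r j := by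
    intro j
    refine Metric.hausdorffDist_le_of_mem_dist (hrnn j) ?_ ?_
    · rintro x ⟨t, ht, rfl⟩
      have hs₀low : -(tmin j) ≤ t - tmin j := by linarith [ht.1]
      have hs₀high : t - tmin j ≤ L j - tmin j := by linarith [ht.2]
      have habs1 : tmin j - b ≤ δ j :=
        le_trans (le_abs_self _) (le_add_of_nonneg_right (abs_nonneg _))
      have habs2 : L j - tmin j - b ≤ δ j :=
        le_trans (le_abs_self _) (le_add_of_nonneg_left (abs_nonneg _))
      obtain ⟨s, hsdef⟩ : ∃ s : ℝ, s = max (-b) (min b (t - tmin j)) := ⟨_, rfl⟩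
      have hsb : |s| ≤ b := by
        rw [hsdef, abs_le]
        exact ⟨le_max_left _ _, max_le (by linarith) (min_le_left _ _)⟩
      refine ⟨P + (s : ℂ) * E, ⟨hmemT s hsb, s, rfl⟩, hchain j t s ht ?_⟩
      by_cases h1 : t - tmin j < -b
      · have hs : s = -b := by
          rw [hsdef, min_eq_right (by linarith), max_eq_left (by linarith)]
        rw [hs, abs_of_nonpos (by linarith)]
        linarith
      · by_cases h2 : b < t - tmin j
        · have hs : s = b := by
            rw [hsdef, min_eq_left (by linarith), max_eq_right (by linarith)]
          rw [hs, abs_of_nonneg (by linarith)]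
          linarith
        · have hs : s = t - tmin j := by
            rw [hsdef, min_eq_right (by linarith), max_eq_right (by linarith)]
          rw [hs, sub_self, abs_zero]
          exact hδnn j
    · rintro z ⟨hz, sz, rfl⟩
      have hszb : |sz| ≤ b := hrevT sz hz
      have hsz1 : -b ≤ sz := (abs_le.mp hszb).1
      have hsz2 : sz ≤ b := (abs_le.mp hszb).2
      have habs1 : b - tmin j ≤ δ j := by
        refine le_trans ?_ (le_add_of_nonneg_right (abs_nonneg _))
        rw [show b - tmin j = -(tmin j - b) by ring]
        exact neg_le_abs _
      have habs2 : b - (L j - tmin j) ≤ δ j := by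
        refine le_trans ?_ (le_add_of_nonneg_left (abs_nonneg _))
        rw [show b - (L j - tmin j) = -(L j - tmin j - b) by ring]
        exact neg_le_abs _
      obtain ⟨t, htdef⟩ : ∃ t : ℝ, t = min (L j) (max 0 (tmin j + sz)) := ⟨_, rfl⟩
      have ht : t ∈ Icc (0:ℝ) (L j) := by
        rw [htdef]
        exact ⟨le_min (hLpos j).le (le_max_left _ _), min_le_left _ _⟩
      refine ⟨γ j t, mem_image_of_mem _ ht, ?_⟩
      rw [dist_comm]
      refine hchain j t sz ht ?_
      have htm0 := (htmem j).1
      have htmL := (htmem j).2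
      by_cases h1 : tmin j + sz < 0
      · have htv : t = 0 := by
          rw [htdef, max_eq_left (by linarith), min_eq_right (hLpos j).le]
        rw [htv, abs_of_nonneg (by linarith)]
        linarith
      · by_cases h2 : L j < tmin j + sz
        · have htv : t = L j := by
            rw [htdef, max_eq_right (by linarith [hLpos j]), min_eq_left (by linarith)]
          rw [htv, abs_of_nonpos (by linarith)]
          linarith
        · have htv : t = tmin j + sz := by
            rw [htdef, max_eq_right (by linarith), min_eq_right (by linarith)]
          rw [htv, add_sub_cancel_left, sub_self, abs_zero]
          exact hδnn j
  exact squeeze_zero (fun j => Metric.hausdorffDist_nonneg) key hr0
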